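/- Degree equals weight (Brundan–Kleshchev–Wang degree versus flow weight). For every flow f on a valid ladder presentation P (parameters n, ℓ, m) one has deg_BKW(ι(P,f)) = wt(f). -/

import Mathlib

open scoped Classical

namespace SlnWeb

noncomputable section

/-- `p r` is the length of the `r`-th row (0-indexed) of a Young diagram. -/
def IsPartition (p : ℕ → ℕ) : Prop :=
  Antitone p ∧ ∃ N, p N = 0

/-- The 0-indexed cell `(r, c)` lies in the Young diagram of `p`. -/
def InDiag (p : ℕ → ℕ) (r c : ℕ) : Prop :=
  c < p r

/-- Residue (with shift `ℓ`) of the 0-indexed cell `(r, c)`; for the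
corresponding 1-indexed cell `(r+1, c+1)` this is `(c+1) - (r+1) + ℓ`. -/
def resOf (ℓ : ℕ) (r c : ℕ) : ℤ :=
  (c : ℤ) - (r : ℤ) + (ℓ : ℤ)

/-- `(r, c)` (0-indexed) is an addable cell of `p`. -/
def IsAddableCell (p : ℕ → ℕ) (r c : ℕ) : Prop :=
  c = p r ∧ (r = 0 ∨ p r < p (r - 1))

/-- `(r, c)` (0-indexed) is a removable cell of `p`. -/
def IsRemovableCell (p : ℕ → ℕ) (r c : ℕ) : Prop :=
  c + 1 = p r ∧ p (r + 1) < p r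

/-- Add to `p` its (unique) addable cell of residue `k`, if there is one. -/
def addRes (ℓ : ℕ) (p : ℕ → ℕ) (k : ℤ) : ℕ → ℕ :=
  if h : ∃ r, (r = 0 ∨ p r < p (r - 1)) ∧ (p r : ℤ) - (r : ℤ) + (ℓ : ℤ) = k then
    Function.update p h.choose (p h.choose + 1)
  else p

/-- A multitableau: `shape t r` is the length of the `r`-th row (0-indexed) of
the `t`-th component (components are indexed by `t ∈ {1,…,n}`), and
`entry t r c` is the entry of the 0-indexed cell `(r, c)` of the `t`-th
component; everything is normalised to `0` outside of the diagrams. -/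
structure MultiTableau where
  shape : ℕ → ℕ → ℕ
  entry : ℕ → ℕ → ℕ → ℕ

/-- A standard `n`-multitableau with entries in `{1,…,s}` (residue shift `ℓ`):
each component is a partition, components are normalised to be empty outside
of `{1,…,n}`, entries lie in `{1,…,s}` and are normalised to `0` outside the
diagram, entries strictly increase along rows and down columns, no entry is
repeated inside a single component, and all nodes carrying the same entry have
the same residue. -/
def IsStandard (n ℓ s : ℕ) (M : MultiTableau) : Prop :=
  (∀ t, IsPartition (M.shape t)) ∧
  (∀ t, (t = 0 ∨ n < t) → ∀ r, M.shape t r = 0) ∧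
  (∀ t r c, InDiag (M.shape t) r c → 1 ≤ M.entry t r c ∧ M.entry t r c ≤ s) ∧
  (∀ t r c, ¬ InDiag (M.shape t) r c → M.entry t r c = 0) ∧
  (∀ t r c c', c < c' → InDiag (M.shape t) r c' → M.entry t r c < M.entry t r c') ∧
  (∀ t r r' c, r < r' → InDiag (M.shape t) r' c → M.entry t r c < M.entry t r' c) ∧
  (∀ t r c r' c', InDiag (M.shape t) r c → InDiag (M.shape t) r' c' →
    M.entry t r c = M.entry t r' c' → r = r' ∧ c = c') ∧
  (∀ t r c t' r' c', InDiag (M.shape t) r c → InDiag (M.shape t') r' c' →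
    M.entry t r c = M.entry t' r' c' → resOf ℓ r c = resOf ℓ r' c')

/-- A ladder presentation of length `s` for the parameters `n`, `ℓ`, `m`:
the `r`-th step is `F_{i_r}^{(j_r)}` with `i_r = res r ∈ {1,…,m-1}` and
`j_r = mult r ∈ {1,…,n}`. -/
structure LadderPresentation (n ℓ m s : ℕ) where
  res : Fin s → ℕ
  mult : Fin s → ℕ
  res_pos : ∀ r, 1 ≤ res r
  res_lt : ∀ r, res r < m
  mult_pos : ∀ r, 1 ≤ mult r
  mult_le : ∀ r, mult r ≤ n

/-- The weight sequence `k⁽⁰⁾, k⁽¹⁾, …` of a ladder presentation; positions `p`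
are 1-indexed, `k⁽⁰⁾ = (n^ℓ)` and `k⁽ʳ⁾ = k⁽ʳ⁻¹⁾ - j_r·e_{i_r} + j_r·e_{i_r+1}`. -/
def wtSeq {n ℓ m s : ℕ} (P : LadderPresentation n ℓ m s) : ℕ → ℕ → ℤ
  | 0, p => if 1 ≤ p ∧ p ≤ ℓ then (n : ℤ) else 0
  | r + 1, p =>
    if h : r < s then
      wtSeq P r p - (if p = P.res ⟨r, h⟩ then (P.mult ⟨r, h⟩ : ℤ) else 0) +
        (if p = P.res ⟨r, h⟩ + 1 then (P.mult ⟨r, h⟩ : ℤ) else 0)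
    else wtSeq P r p

/-- A ladder presentation is valid if every entry of every weight in its weight
sequence lies in `{0,…,n}`. -/
def IsValid {n ℓ m s : ℕ} (P : LadderPresentation n ℓ m s) : Prop :=
  ∀ r, r ≤ s → ∀ p, 1 ≤ p → p ≤ m → 0 ≤ wtSeq P r p ∧ wtSeq P r p ≤ (n : ℤ)

/-- A flow on a (valid) ladder presentation `P`.  `S r p ⊆ {1,…,n}` is the flow
label of the `p`-th boundary point after `r` steps (normalised to `∅` outside
`p ∈ {1,…,m}`), and `T r` is the flow label of the rung of the `r`-th ladder. -/
structure LadderFlow {n ℓ m s : ℕ} (P : LadderPresentation n ℓ m s) where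
  S : Fin (s + 1) → ℕ → Finset ℕ
  T : Fin s → Finset ℕ
  S_sub : ∀ r p, S r p ⊆ Finset.Icc 1 n
  S_outside : ∀ r p, (p = 0 ∨ m < p) → S r p = ∅
  S_card : ∀ r p, 1 ≤ p → p ≤ m → ((S r p).card : ℤ) = wtSeq P r.val p
  S_init : ∀ p, 1 ≤ p → p ≤ m → S 0 p = if p ≤ ℓ then Finset.Icc 1 n else ∅
  T_sub : ∀ r : Fin s, T r ⊆ S r.castSucc (P.res r)
  T_card : ∀ r : Fin s, (T r).card = P.mult r
  T_disj : ∀ r : Fin s, Disjoint (T r) (S r.castSucc (P.res r + 1))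
  S_step_res : ∀ r : Fin s, S r.succ (P.res r) = S r.castSucc (P.res r) \ T r
  S_step_res1 : ∀ r : Fin s, S r.succ (P.res r + 1) = S r.castSucc (P.res r + 1) ∪ T r
  S_step_other : ∀ r : Fin s, ∀ p, p ≠ P.res r → p ≠ P.res r + 1 →
    S r.succ p = S r.castSucc p

/-- Add, for every component `t ∈ Tset`, the (unique) addable cell of residue
`k` of that component, giving each of the new cells the entry `e`. -/
def stepAdd (ℓ : ℕ) (k : ℤ) (e : ℕ) (Tset : Finset ℕ) (M : MultiTableau) :
    MultiTableau where
  shape := fun t => if t ∈ Tset then addRes ℓ (M.shape t) k else M.shape t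
  entry := fun t r c =>
    if t ∈ Tset ∧ M.shape t r ≤ c ∧ c < addRes ℓ (M.shape t) k r then e
    else M.entry t r c

/-- The sequence of intermediate multitableaux built by the filling map `ι`:
at step `r` (0-indexed), for each `t ∈ T r`, the unique addable node of residue
`i_r` is added to the `t`-th component, with entry `r + 1`. -/
def iotaAux {n ℓ m s : ℕ} (P : LadderPresentation n ℓ m s) (f : LadderFlow P) :
    ℕ → MultiTableau
  | 0 => ⟨fun _ _ => 0, fun _ _ _ => 0⟩
  | r + 1 =>
    if h : r < s then
      stepAdd ℓ (P.res ⟨r, h⟩ : ℤ) (r + 1) (f.T ⟨r, h⟩) (iotaAux P f r)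
    else iotaAux P f r

/-- The filling map `ι`. -/
def iotaMap {n ℓ m s : ℕ} (P : LadderPresentation n ℓ m s) (f : LadderFlow P) :
    MultiTableau :=
  iotaAux P f s

/-- Every entry of `{1,…,s}` occurs in `M`. -/
def AllEntriesOccur (s : ℕ) (M : MultiTableau) : Prop :=
  ∀ e, 1 ≤ e → e ≤ s → ∃ t r c, InDiag (M.shape t) r c ∧ M.entry t r c = e

/-- All nodes of `M` have residue in `{1,…,m-1}`. -/
def ResInRange (ℓ m : ℕ) (M : MultiTableau) : Prop :=
  ∀ t r c, InDiag (M.shape t) r c → 1 ≤ resOf ℓ r c ∧ resOf ℓ r c ≤ (m : ℤ) - 1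

/-- `(P, f)` is the image of the multitableau `M` under the growth map `g`:
`i_r` is the common residue of the nodes of `M` with entry `r`, and `T r` is
the set of components of `M` containing a node with entry `r` (the remaining
data of `f`, i.e. the tuples `S`, is forced by the flow conditions, and
`j_r = |T r|` is forced by the flow condition `T_card`). -/
def GrowthData {n ℓ m s : ℕ} (M : MultiTableau) (P : LadderPresentation n ℓ m s)
    (f : LadderFlow P) : Prop :=
  (∀ r : Fin s, ∀ t r' c, InDiag (M.shape t) r' c → M.entry t r' c = r.val + 1 →
    (P.res r : ℤ) = resOf ℓ r' c) ∧
  (∀ r : Fin s, ∀ t,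
    t ∈ f.T r ↔ ∃ r' c, InDiag (M.shape t) r' c ∧ M.entry t r' c = r.val + 1)

/-- `#{(a,b) ∈ A × B : a < b}`. -/
def inv2 (A B : Finset ℕ) : ℕ :=
  ((A ×ˢ B).filter fun ab => ab.1 < ab.2).card

/-- The weight of a flow:
`wt(f) = Σ_r ( inv(S⁽ʳ⁾_{i_r}, T_r) − inv(S⁽ʳ⁻¹⁾_{i_r+1}, T_r) )`. -/
def wtFlow {n ℓ m s : ℕ} (P : LadderPresentation n ℓ m s) (f : LadderFlow P) : ℤ :=
  ∑ r : Fin s,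
    ((inv2 (f.S r.succ (P.res r)) (f.T r) : ℤ) -
      (inv2 (f.S r.castSucc (P.res r + 1)) (f.T r) : ℤ))

/-- The components of `M` (among `{1,…,n}`) containing a node with entry `j`. -/
def compsWith (n : ℕ) (M : MultiTableau) (j : ℕ) : Finset ℕ :=
  (Finset.Icc 1 n).filter fun t => ∃ r c, InDiag (M.shape t) r c ∧ M.entry t r c = j

/-- The shape of `M` with all entries `> j` removed, where moreover in the
components outside `Keep` the nodes with entry `j` are removed as well. -/
def shapeTrunc (M : MultiTableau) (j : ℕ) (Keep : Finset ℕ) : ℕ → ℕ → ℕ :=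
  fun t r =>
    ((Finset.range (M.shape t r)).filter fun c =>
      M.entry t r c ≤ (if t ∈ Keep then j else j - 1)).card

/-- The row of the node with entry `j` in component `t` of `M`. -/
def nodeRow (M : MultiTableau) (j t : ℕ) : ℕ :=
  if h : ∃ r c, InDiag (M.shape t) r c ∧ M.entry t r c = j then h.choose else 0

/-- The column of the node with entry `j` in component `t` of `M`. -/
def nodeCol (M : MultiTableau) (j t : ℕ) : ℕ :=
  if h : ∃ r c, InDiag (M.shape t) r c ∧ M.entry t r c = j then
    h.choose_spec.choose
  else 0

/-- The number of addable nodes of `sh` of residue `ρ` lying strictly after the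
position `(t, r)` in the order `⪯` (at most one addable node of a given residue
per component). -/
def cntAddAfter (n ℓ : ℕ) (sh : ℕ → ℕ → ℕ) (ρ : ℤ) (t r : ℕ) : ℕ :=
  ((Finset.Icc 1 n).filter fun t' => ∃ r' c', IsAddableCell (sh t') r' c' ∧
    resOf ℓ r' c' = ρ ∧ (t' < t ∨ (t' = t ∧ r < r'))).card

/-- The number of removable nodes of `sh` of residue `ρ` lying strictly after
the position `(t, r)` in the order `⪯`. -/
def cntRemAfter (n ℓ : ℕ) (sh : ℕ → ℕ → ℕ) (ρ : ℤ) (t r : ℕ) : ℕ :=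
  ((Finset.Icc 1 n).filter fun t' => ∃ r' c', IsRemovableCell (sh t') r' c' ∧
    resOf ℓ r' c' = ρ ∧ (t' < t ∨ (t' = t ∧ r < r'))).card

/-- The contribution `deg(Tʲ)` of the entry `j` to the Brundan–Kleshchev–Wang
degree of the standard multitableau `M`: listing the nodes with entry `j` as
`N₁ ≺ ⋯ ≺ N_t` (i.e. by decreasing component index), it is
`Σ_p (A_p − R_p) − t(t−1)/2`, where `A_p` (resp. `R_p`) is the number of
addable (resp. removable) nodes of the residue of `N_p`, strictly after `N_p`,
of the multipartition underlying `Tʲ` with the nodes `N_{p+1},…,N_t` removed. -/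
def degStep (n ℓ : ℕ) (M : MultiTableau) (j : ℕ) : ℤ :=
  (∑ t ∈ compsWith n M j,
    ((cntAddAfter n ℓ (shapeTrunc M j ((compsWith n M j).filter fun t' => t ≤ t'))
        (resOf ℓ (nodeRow M j t) (nodeCol M j t)) t (nodeRow M j t) : ℤ) -
      (cntRemAfter n ℓ (shapeTrunc M j ((compsWith n M j).filter fun t' => t ≤ t'))
        (resOf ℓ (nodeRow M j t) (nodeCol M j t)) t (nodeRow M j t) : ℤ))) -
  (((compsWith n M j).card * ((compsWith n M j).card - 1) / 2 : ℕ) : ℤ)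

/-- The Brundan–Kleshchev–Wang degree of a standard multitableau with entries
in `{1,…,s}`. -/
def degBKW (n ℓ s : ℕ) (M : MultiTableau) : ℤ :=
  ∑ j ∈ Finset.Icc 1 s, degStep n ℓ M j

/-- `M` has the residue sequence `((i_1,j_1),…,(i_s,j_s))` recorded by `P`:
for each `r`, exactly `j_r` nodes of `M` carry the entry `r` (equivalently,
under standardness, `j_r` components contain the entry `r`) and they all have
residue `i_r`. -/
def HasResSeq {n ℓ m s : ℕ} (P : LadderPresentation n ℓ m s) (M : MultiTableau) :
    Prop :=
  ∀ r : Fin s,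
    (compsWith n M (r.val + 1)).card = P.mult r ∧
    ∀ t r' c, InDiag (M.shape t) r' c → M.entry t r' c = r.val + 1 →
      resOf ℓ r' c = (P.res r : ℤ)

/-- The multipartition `λ(S)` determined by a boundary tuple `S`: writing
`p_1 < ⋯ < p_ℓ` for the elements of `{ p ∈ {1,…,m} : t ∈ S p }`, the `r`-th
part (1-indexed) of its `t`-th component is `p_{ℓ+1−r} − (ℓ+1−r)`. -/
def shapeOfTuple (ℓ m : ℕ) (Sb : ℕ → Finset ℕ) : ℕ → ℕ → ℕ :=
  fun t r =>
    if r < ℓ then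
      (((Finset.Icc 1 m).filter fun p => t ∈ Sb p).sort (· ≤ ·)).getD (ℓ - 1 - r) 0 -
        (ℓ - r)
    else 0

/-! ### Auxiliary combinatorics: beta-sets and row lengths -/

/-- number of elements of `B` greater than `p`. -/
def gB (B : Finset ℕ) (p : ℕ) : ℕ := (B.filter fun p' => p < p').card

/-- row lengths of the partition with beta-set `B ⊆ {1,…,m}`. -/
def rowB (m : ℕ) (B : Finset ℕ) (q : ℕ) : ℕ :=
  ((Finset.Icc 1 m).filter fun p => p ∉ B ∧ q < gB B p).card

lemma gB_anti {B : Finset ℕ} {p p' : ℕ} (h : p ≤ p') : gB B p' ≤ gB B p := by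
  apply Finset.card_le_card
  intro x hx
  simp only [Finset.mem_filter] at hx ⊢
  exact ⟨hx.1, lt_of_le_of_lt h hx.2⟩

lemma gB_lt_of_mem {B : Finset ℕ} {x p : ℕ} (hx : x ∈ B) (h : p < x) :
    gB B x < gB B p := by
  have hsub : insert x (B.filter fun p' => x < p') ⊆ B.filter fun p' => p < p' := by
    intro y hy
    simp only [Finset.mem_insert, Finset.mem_filter] at hy ⊢
    rcases hy with rfl | ⟨h1, h2⟩
    · exact ⟨hx, h⟩
    · exact ⟨h1, h.trans h2⟩
  have hxn : x ∉ B.filter fun p' => x < p' := by simp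
  calc gB B x < gB B x + 1 := Nat.lt_succ_self _
  _ = (insert x (B.filter fun p' => x < p')).card := (Finset.card_insert_of_notMem hxn).symm
  _ ≤ _ := Finset.card_le_card hsub

lemma gB_le_card (B : Finset ℕ) (p : ℕ) : gB B p ≤ B.card := Finset.card_filter_le _ _

lemma gB_split (B : Finset ℕ) (p : ℕ) :
    (B.filter fun x => x ≤ p).card + gB B p = B.card := by
  have h := Finset.card_filter_add_card_filter_not (s := B) (p := fun x => x ≤ p)
  simp only [not_le] at h
  convert h using 3
  rw [gB]

lemma mem_split {B : Finset ℕ} {p : ℕ} (hp : p ∈ B) :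
    (B.filter fun x => x ≤ p).card = (B.filter fun x => x < p).card + 1 := by
  have he : (B.filter fun x => x ≤ p) = insert p (B.filter fun x => x < p) := by
    ext x; simp only [Finset.mem_filter, Finset.mem_insert]
    constructor
    · rintro ⟨hx, hxp⟩
      rcases eq_or_lt_of_le hxp with rfl | h
      · exact Or.inl rfl
      · exact Or.inr ⟨hx, h⟩
    · rintro (rfl | ⟨hx, h⟩)
      · exact ⟨hp, le_refl _⟩
      · exact ⟨hx, h.le⟩
  rw [he, Finset.card_insert_of_notMem (by simp)]

lemma card_below {m : ℕ} {B : Finset ℕ} (hB : B ⊆ Finset.Icc 1 m) {p : ℕ} (hp : p ≤ m + 1) :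
    ((Finset.Icc 1 m).filter fun x => x ∉ B ∧ x < p).card
      + (B.filter fun x => x < p).card = p - 1 := by
  have e1 : ((Finset.Icc 1 m).filter fun x => x ∉ B ∧ x < p)
      = (Finset.Icc 1 (p-1)) \ B := by
    ext x
    simp only [Finset.mem_filter, Finset.mem_Icc, Finset.mem_sdiff]
    constructor
    · rintro ⟨⟨h1, h2⟩, h3, h4⟩
      exact ⟨⟨h1, by omega⟩, h3⟩
    · rintro ⟨⟨h1, h2⟩, h3⟩
      exact ⟨⟨h1, by omega⟩, h3, by omega⟩
  have e2 : (B.filter fun x => x < p) = (Finset.Icc 1 (p-1)) ∩ B := by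
    ext x
    simp only [Finset.mem_filter, Finset.mem_Icc, Finset.mem_inter]
    constructor
    · rintro ⟨h1, h2⟩
      have hx1 := hB h1
      simp only [Finset.mem_Icc] at hx1
      exact ⟨⟨hx1.1, by omega⟩, h1⟩
    · rintro ⟨⟨h1, h2⟩, h3⟩
      exact ⟨h3, by omega⟩
  rw [e1, e2, Finset.card_sdiff_add_card_inter, Nat.card_Icc]
  omega

lemma rowB_beta {m : ℕ} {B : Finset ℕ} (hB : B ⊆ Finset.Icc 1 m) {p : ℕ} (hp : p ∈ B) :
    rowB m B (gB B p) + B.card = p + gB B p := by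
  have hset : ((Finset.Icc 1 m).filter fun x => x ∉ B ∧ gB B p < gB B x)
      = (Finset.Icc 1 m).filter fun x => x ∉ B ∧ x < p := by
    ext x
    simp only [Finset.mem_filter]
    constructor
    · rintro ⟨h1, h2, h3⟩
      refine ⟨h1, h2, ?_⟩
      by_contra hcon
      exact absurd (gB_anti (not_lt.mp hcon)) (not_le.mpr h3)
    · rintro ⟨h1, h2, h3⟩
      exact ⟨h1, h2, gB_lt_of_mem hp h3⟩
  have hpm := hB hp
  simp only [Finset.mem_Icc] at hpm
  have h1 : rowB m B (gB B p) + (B.filter fun x => x < p).card = p - 1 := by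
    rw [rowB, hset]
    exact card_below hB (by omega)
  have h2 := gB_split B p
  have h3 := mem_split hp
  omega

lemma exists_beta {B : Finset ℕ} {q : ℕ} (hq : q < B.card) : ∃ p ∈ B, gB B p = q := by
  have hne : B.Nonempty := Finset.card_pos.mp (by omega)
  have hCne : (B.filter fun p => gB B p ≤ q).Nonempty := by
    refine ⟨B.max' hne, ?_⟩
    simp only [Finset.mem_filter]
    refine ⟨B.max'_mem hne, ?_⟩
    have h0 : gB B (B.max' hne) = 0 := by
      rw [gB, Finset.card_eq_zero]
      rw [Finset.filter_eq_empty_iff]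
      intro x hx
      exact not_lt.mpr (B.le_max' x hx)
    omega
  set C := B.filter fun p => gB B p ≤ q with hC
  set p := C.min' hCne with hpdef
  have hpC : p ∈ C := C.min'_mem hCne
  simp only [hC, Finset.mem_filter] at hpC
  obtain ⟨hpB, hple⟩ := hpC
  refine ⟨p, hpB, ?_⟩
  by_contra hne2
  have hlt : gB B p < q := lt_of_le_of_ne hple hne2
  have hsplit := gB_split B p
  have hms := mem_split hpB
  have hDcard : 0 < (B.filter fun x => x < p).card := by omega
  have hDne : (B.filter fun x => x < p).Nonempty := Finset.card_pos.mp hDcard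
  set p2 := (B.filter fun x => x < p).max' hDne with hp2def
  have hp2mem : p2 ∈ B.filter fun x => x < p := Finset.max'_mem _ hDne
  simp only [Finset.mem_filter] at hp2mem
  have hgp2 : gB B p2 = gB B p + 1 := by
    rw [gB, gB]
    have he : (B.filter fun x => p2 < x) = insert p (B.filter fun x => p < x) := by
      ext y
      simp only [Finset.mem_filter, Finset.mem_insert]
      constructor
      · rintro ⟨hyB, hy⟩
        rcases lt_or_ge y p with h | h
        · have hy2 : y ∈ B.filter fun x => x < p := Finset.mem_filter.mpr ⟨hyB, h⟩
          have : y ≤ p2 := Finset.le_max' _ y hy2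
          omega
        · rcases eq_or_lt_of_le h with h' | h'
          · exact Or.inl h'.symm
          · exact Or.inr ⟨hyB, h'⟩
      · rintro (rfl | ⟨hyB, hy⟩)
        · exact ⟨hpB, hp2mem.2⟩
        · exact ⟨hyB, hp2mem.2.trans hy⟩
    rw [he, Finset.card_insert_of_notMem (by simp)]
  have hp2C : p2 ∈ C := by
    simp only [hC, Finset.mem_filter]
    exact ⟨hp2mem.1, by omega⟩
  have := Finset.min'_le C p2 hp2C
  omega

lemma rowB_anti {m : ℕ} (B : Finset ℕ) {q q' : ℕ} (h : q ≤ q') :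
    rowB m B q' ≤ rowB m B q := by
  apply Finset.card_le_card
  intro x hx
  simp only [Finset.mem_filter] at hx ⊢
  exact ⟨hx.1, hx.2.1, lt_of_le_of_lt h hx.2.2⟩

lemma rowB_zero {m : ℕ} {B : Finset ℕ} {q : ℕ} (h : B.card ≤ q) : rowB m B q = 0 := by
  rw [rowB, Finset.card_eq_zero, Finset.filter_eq_empty_iff]
  intro x _
  rintro ⟨h1, h2⟩
  exact absurd h2 (not_lt.mpr ((gB_le_card B x).trans h))

lemma rowB_inj_res {m : ℕ} (B : Finset ℕ) {q1 q2 : ℕ} {z : ℤ}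
    (h1 : (rowB m B q1 : ℤ) - q1 = z) (h2 : (rowB m B q2 : ℤ) - q2 = z) : q1 = q2 := by
  rcases lt_trichotomy q1 q2 with h | h | h
  · have := rowB_anti (m := m) B h.le
    omega
  · exact h
  · have := rowB_anti (m := m) B h.le
    omega

lemma gB_succ_not_mem {B : Finset ℕ} {i : ℕ} (h : i + 1 ∉ B) : gB B i = gB B (i+1) := by
  rw [gB, gB]
  congr 1
  ext x
  simp only [Finset.mem_filter]
  constructor
  · rintro ⟨hx, hix⟩
    have hxne : x ≠ i + 1 := by rintro rfl; exact h hx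
    exact ⟨hx, by omega⟩
  · rintro ⟨hx, hix⟩
    exact ⟨hx, by omega⟩

lemma gB_succ_mem {B : Finset ℕ} {i : ℕ} (h : i + 1 ∈ B) : gB B i = gB B (i+1) + 1 := by
  rw [gB, gB]
  have he : (B.filter fun x => i < x) = insert (i+1) (B.filter fun x => i+1 < x) := by
    ext x
    simp only [Finset.mem_filter, Finset.mem_insert]
    constructor
    · rintro ⟨hx, hix⟩
      rcases eq_or_ne x (i+1) with rfl | hne
      · exact Or.inl rfl
      · exact Or.inr ⟨hx, by omega⟩
    · rintro (rfl | ⟨hx, hix⟩)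
      · exact ⟨h, by omega⟩
      · exact ⟨hx, by omega⟩
  rw [he, Finset.card_insert_of_notMem (by simp)]

/-! ### Addable and removable cells via beta-sets -/

lemma addable_at {m ℓ i : ℕ} {B : Finset ℕ} (hB : B ⊆ Finset.Icc 1 m) (hcard : B.card = ℓ)
    (hiB : i ∈ B) (hi1B : i + 1 ∉ B) :
    (gB B i = 0 ∨ rowB m B (gB B i) < rowB m B (gB B i - 1)) ∧
      rowB m B (gB B i) + ℓ = i + gB B i := by
  have hbeta := rowB_beta hB hiB
  have h2 : rowB m B (gB B i) + ℓ = i + gB B i := by omega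
  refine ⟨?_, h2⟩
  rcases Nat.eq_zero_or_pos (gB B i) with h0 | hpos
  · exact Or.inl h0
  · right
    have hs1 := gB_split B i
    have hs2 := mem_split hiB
    have hqlt : gB B i - 1 < B.card := by omega
    obtain ⟨p', hp'B, hgp'⟩ := exists_beta hqlt
    have hbeta' := rowB_beta hB hp'B
    have hp'grt : i < p' := by
      by_contra hcon
      have := gB_anti (B := B) (not_lt.mp hcon)
      omega
    have hp'ne : p' ≠ i + 1 := fun he => hi1B (he ▸ hp'B)
    rw [hgp'] at hbeta'
    omega

lemma addable_iff {m ℓ i : ℕ} {B : Finset ℕ} (hB : B ⊆ Finset.Icc 1 m)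
    (hcard : B.card = ℓ) (hi1 : 1 ≤ i) :
    (∃ q c, IsAddableCell (rowB m B) q c ∧ resOf ℓ q c = (i : ℤ)) ↔ (i ∈ B ∧ i + 1 ∉ B) := by
  constructor
  · rintro ⟨q, c, ⟨hc, hadd⟩, hres⟩
    rw [resOf] at hres
    subst hc
    have hnat : rowB m B q + ℓ = i + q := by omega
    have hqlt : q < B.card := by
      by_contra hcon
      have h0 : rowB m B q = 0 := rowB_zero (not_lt.mp hcon)
      omega
    obtain ⟨p, hpB, hgp⟩ := exists_beta hqlt
    have hbeta := rowB_beta hB hpB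
    rw [hgp] at hbeta
    have hpi : p = i := by omega
    subst hpi
    refine ⟨hpB, ?_⟩
    intro hi1B
    have hq1 : gB B p = gB B (p+1) + 1 := gB_succ_mem hi1B
    have hbeta2 := rowB_beta hB hi1B
    rcases hadd with h0 | hlt
    · omega
    · have hgq : gB B (p+1) = q - 1 := by omega
      rw [hgq] at hbeta2
      omega
  · rintro ⟨hiB, hi1B⟩
    obtain ⟨hadd, heq⟩ := addable_at (ℓ := ℓ) hB hcard hiB hi1B
    refine ⟨gB B i, rowB m B (gB B i), ⟨rfl, hadd⟩, ?_⟩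
    rw [resOf]
    omega

lemma removable_iff {m ℓ i : ℕ} {B : Finset ℕ} (hB : B ⊆ Finset.Icc 1 m)
    (hcard : B.card = ℓ) (hi1 : 1 ≤ i) (him : i + 1 ≤ m) :
    (∃ q c, IsRemovableCell (rowB m B) q c ∧ resOf ℓ q c = (i : ℤ)) ↔ (i ∉ B ∧ i + 1 ∈ B) := by
  constructor
  · rintro ⟨q, c, ⟨hc, hlt⟩, hres⟩
    rw [resOf] at hres
    have hnat : rowB m B q + ℓ = i + 1 + q := by omega
    have hqlt : q < B.card := by
      by_contra hcon
      have h0 : rowB m B q = 0 := rowB_zero (not_lt.mp hcon)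
      omega
    obtain ⟨p, hpB, hgp⟩ := exists_beta hqlt
    have hbeta := rowB_beta hB hpB
    rw [hgp] at hbeta
    have hpi : p = i + 1 := by omega
    subst hpi
    refine ⟨?_, hpB⟩
    intro hiB
    have hq1 : gB B i = gB B (i+1) + 1 := gB_succ_mem hpB
    have hbeta2 := rowB_beta hB hiB
    have hgq : gB B i = q + 1 := by omega
    rw [hgq] at hbeta2
    omega
  · rintro ⟨h1, h2⟩
    have hbeta := rowB_beta hB h2
    have hb1 : (B.filter fun x => x < i + 1) ⊆ Finset.Icc 1 (i-1) := by
      intro x hx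
      simp only [Finset.mem_filter] at hx
      have hx1 := hB hx.1
      simp only [Finset.mem_Icc] at hx1 ⊢
      have : x ≠ i := by rintro rfl; exact h1 hx.1
      omega
    have hcard1 : (B.filter fun x => x < i+1).card ≤ i - 1 := by
      calc (B.filter fun x => x < i+1).card ≤ (Finset.Icc 1 (i-1)).card :=
            Finset.card_le_card hb1
      _ = i - 1 := by rw [Nat.card_Icc]; omega
    have hsplit := gB_split B (i+1)
    have hms := mem_split h2
    have hrow_pos : 1 ≤ rowB m B (gB B (i+1)) := by omega
    have hstrict : rowB m B (gB B (i+1) + 1) < rowB m B (gB B (i+1)) := by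
      rcases lt_or_ge (gB B (i+1) + 1) B.card with hlt | hge
      · obtain ⟨p', hp'B, hgp'⟩ := exists_beta hlt
        have hbeta' := rowB_beta hB hp'B
        rw [hgp'] at hbeta'
        have hlt2 : p' < i + 1 := by
          by_contra hcon
          have := gB_anti (B := B) (not_lt.mp hcon : i + 1 ≤ p')
          omega
        have hne2 : p' ≠ i := fun he => h1 (he ▸ hp'B)
        omega
      · have := rowB_zero (m := m) hge
        omega
    refine ⟨gB B (i+1), rowB m B (gB B (i+1)) - 1, ⟨by omega, hstrict⟩, ?_⟩
    rw [resOf]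
    omega

lemma gB_swap {B : Finset ℕ} {i : ℕ} (hiB : i ∈ B) (hi1B : i + 1 ∉ B) (x : ℕ) :
    gB (insert (i+1) (B.erase i)) x = gB B x + (if x = i then 1 else 0) := by
  rcases lt_trichotomy x i with hx | hx | hx
  · rw [if_neg (by omega)]
    rw [gB, gB]
    have hi_mem : i ∈ B.filter fun y => x < y := Finset.mem_filter.mpr ⟨hiB, hx⟩
    have hset : ((insert (i+1) (B.erase i)).filter fun y => x < y)
        = insert (i+1) ((B.filter fun y => x < y).erase i) := by
      ext y
      simp only [Finset.mem_filter, Finset.mem_insert, Finset.mem_erase]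
      constructor
      · rintro ⟨(rfl | ⟨hyne, hyB⟩), hxy⟩
        · exact Or.inl rfl
        · exact Or.inr ⟨hyne, hyB, hxy⟩
      · rintro (rfl | ⟨hyne, hyB, hxy⟩)
        · exact ⟨Or.inl rfl, by omega⟩
        · exact ⟨Or.inr ⟨hyne, hyB⟩, hxy⟩
    rw [hset, Finset.card_insert_of_notMem
        (by simp only [Finset.mem_erase, Finset.mem_filter]; rintro ⟨-, h, -⟩; exact hi1B h),
      Finset.card_erase_of_mem hi_mem]
    have hpos : 0 < (B.filter fun y => x < y).card := Finset.card_pos.mpr ⟨i, hi_mem⟩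
    omega
  · have hx' : i = x := hx.symm
    subst hx'
    rw [if_pos rfl, gB, gB]
    have hset : ((insert (i+1) (B.erase i)).filter fun y => i < y)
        = insert (i+1) (B.filter fun y => i < y) := by
      ext y
      simp only [Finset.mem_filter, Finset.mem_insert, Finset.mem_erase]
      constructor
      · rintro ⟨(rfl | ⟨hyne, hyB⟩), hxy⟩
        · exact Or.inl rfl
        · exact Or.inr ⟨hyB, hxy⟩
      · rintro (rfl | ⟨hyB, hxy⟩)
        · exact ⟨Or.inl rfl, by omega⟩
        · exact ⟨Or.inr ⟨by omega, hyB⟩, hxy⟩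
    rw [hset, Finset.card_insert_of_notMem
        (by simp only [Finset.mem_filter]; rintro ⟨h, -⟩; exact hi1B h)]
  · rw [if_neg (by omega), gB, gB]
    congr 1
    ext y
    simp only [Finset.mem_filter, Finset.mem_insert, Finset.mem_erase]
    constructor
    · rintro ⟨(rfl | ⟨hyne, hyB⟩), hxy⟩
      · exact absurd hxy (by omega)
      · exact ⟨hyB, hxy⟩
    · rintro ⟨hyB, hxy⟩
      exact ⟨Or.inr ⟨by omega, hyB⟩, hxy⟩

lemma rowB_swap {m i : ℕ} {B : Finset ℕ} (hB : B ⊆ Finset.Icc 1 m) (hi1 : 1 ≤ i)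
    (him : i + 1 ≤ m) (hiB : i ∈ B) (hi1B : i + 1 ∉ B) (q : ℕ) :
    rowB m (insert (i+1) (B.erase i)) q
      = if q = gB B i then rowB m B q + 1 else rowB m B q := by
  have hmem : ∀ x, x ∈ insert (i+1) (B.erase i) ↔ (x = i + 1 ∨ (x ∈ B ∧ x ≠ i)) := by
    intro x
    simp only [Finset.mem_insert, Finset.mem_erase]
    tauto
  have hgs := gB_swap hiB hi1B
  have hgsucc : gB B (i+1) = gB B i := (gB_succ_not_mem hi1B).symm
  rcases lt_trichotomy q (gB B i) with hq | hq | hq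
  · rw [if_neg (by omega)]
    rw [rowB, rowB]
    have hi1mem : (i+1) ∈ (Finset.Icc 1 m).filter fun x => x ∉ B ∧ q < gB B x := by
      simp only [Finset.mem_filter, Finset.mem_Icc]
      refine ⟨⟨by omega, him⟩, hi1B, ?_⟩
      rw [hgsucc]; exact hq
    have hset : ((Finset.Icc 1 m).filter fun x => x ∉ insert (i+1) (B.erase i) ∧
          q < gB (insert (i+1) (B.erase i)) x)
        = insert i (((Finset.Icc 1 m).filter fun x => x ∉ B ∧ q < gB B x).erase (i+1)) := by
      ext x
      simp only [Finset.mem_filter, Finset.mem_insert, Finset.mem_erase, hmem, hgs]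
      constructor
      · rintro ⟨hxm, hxB', hxg⟩
        rcases eq_or_ne x i with rfl | hxi
        · exact Or.inl rfl
        · rcases eq_or_ne x (i+1) with rfl | hxi1
          · exact absurd (Or.inl rfl) hxB'
          · right
            refine ⟨hxi1, hxm, fun hxB => hxB' (Or.inr ⟨hxB, hxi⟩), ?_⟩
            rw [if_neg hxi] at hxg
            exact hxg
      · rintro (rfl | ⟨hxi1, hxm, hxB, hxg⟩)
        · refine ⟨Finset.mem_Icc.mpr ⟨hi1, by omega⟩, ?_, by rw [if_pos rfl]; omega⟩
          rintro (h | ⟨-, hne⟩)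
          · omega
          · exact hne rfl
        · have hxi : x ≠ i := fun he => hxB (he ▸ hiB)
          refine ⟨hxm, ?_, by rw [if_neg hxi]; exact hxg⟩
          rintro (h | ⟨hxB2, -⟩)
          · exact hxi1 h
          · exact hxB hxB2
    rw [hset, Finset.card_insert_of_notMem
        (by simp only [Finset.mem_erase, Finset.mem_filter]; rintro ⟨-, -, h, -⟩; exact h hiB),
      Finset.card_erase_of_mem hi1mem]
    have hpos : 0 < ((Finset.Icc 1 m).filter fun x => x ∉ B ∧ q < gB B x).card :=
      Finset.card_pos.mpr ⟨i+1, hi1mem⟩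
    omega
  · rw [if_pos hq]
    rw [rowB, rowB]
    have hset : ((Finset.Icc 1 m).filter fun x => x ∉ insert (i+1) (B.erase i) ∧
          q < gB (insert (i+1) (B.erase i)) x)
        = insert i ((Finset.Icc 1 m).filter fun x => x ∉ B ∧ q < gB B x) := by
      ext x
      simp only [Finset.mem_filter, Finset.mem_insert, hmem, hgs]
      constructor
      · rintro ⟨hxm, hxB', hxg⟩
        rcases eq_or_ne x i with rfl | hxi
        · exact Or.inl rfl
        · rcases eq_or_ne x (i+1) with rfl | hxi1
          · exact absurd (Or.inl rfl) hxB'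
          · rw [if_neg hxi] at hxg
            exact Or.inr ⟨hxm, fun hxB => hxB' (Or.inr ⟨hxB, hxi⟩), hxg⟩
      · rintro (rfl | ⟨hxm, hxB, hxg⟩)
        · refine ⟨Finset.mem_Icc.mpr ⟨hi1, by omega⟩, ?_, by rw [if_pos rfl]; omega⟩
          rintro (h | ⟨-, hne⟩)
          · omega
          · exact hne rfl
        · have hxi : x ≠ i := fun he => hxB (he ▸ hiB)
          have hxi1 : x ≠ i + 1 := by
            rintro rfl
            rw [hgsucc] at hxg
            omega
          refine ⟨hxm, ?_, by rw [if_neg hxi]; exact hxg⟩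
          rintro (h | ⟨hxB2, -⟩)
          · exact hxi1 h
          · exact hxB hxB2
    rw [hset, Finset.card_insert_of_notMem
        (by simp only [Finset.mem_filter]; rintro ⟨-, h, -⟩; exact h hiB)]
  · rw [if_neg (by omega)]
    rw [rowB, rowB]
    congr 1
    ext x
    simp only [Finset.mem_filter, hmem, hgs]
    constructor
    · rintro ⟨hxm, hxB', hxg⟩
      rcases eq_or_ne x i with rfl | hxi
      · rw [if_pos rfl] at hxg
        exact absurd hxg (by omega)
      · rw [if_neg hxi] at hxg
        exact ⟨hxm, fun hxB => hxB' (Or.inr ⟨hxB, hxi⟩), hxg⟩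
    · rintro ⟨hxm, hxB, hxg⟩
      have hxi : x ≠ i := fun he => hxB (he ▸ hiB)
      have hxi1 : x ≠ i + 1 := by
        rintro rfl
        rw [hgsucc] at hxg
        omega
      refine ⟨hxm, ?_, by rw [if_neg hxi]; exact hxg⟩
      rintro (h | ⟨hxB2, -⟩)
      · exact hxi1 h
      · exact hxB hxB2

lemma addRes_spec {m ℓ i : ℕ} {B : Finset ℕ} (hB : B ⊆ Finset.Icc 1 m)
    (hcard : B.card = ℓ) (hi1 : 1 ≤ i) (him : i + 1 ≤ m) (hiB : i ∈ B) (hi1B : i + 1 ∉ B) :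
    addRes ℓ (rowB m B) (i : ℤ) = rowB m (insert (i+1) (B.erase i)) := by
  obtain ⟨haddable, heq⟩ := addable_at (ℓ := ℓ) hB hcard hiB hi1B
  rw [addRes]
  have hex : ∃ r, (r = 0 ∨ rowB m B r < rowB m B (r-1)) ∧
      (rowB m B r : ℤ) - (r : ℤ) + (ℓ : ℤ) = (i : ℤ) :=
    ⟨gB B i, haddable, by omega⟩
  rw [dif_pos hex]
  have hch := hex.choose_spec
  have h1 : (rowB m B hex.choose : ℤ) - hex.choose = (i : ℤ) - ℓ := by
    have := hch.2
    omega
  have h2 : (rowB m B (gB B i) : ℤ) - (gB B i) = (i : ℤ) - ℓ := by omega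
  have hchoose_eq : hex.choose = gB B i := rowB_inj_res B h1 h2
  rw [hchoose_eq]
  funext q
  rw [Function.update_apply, rowB_swap hB hi1 him hiB hi1B q]
  by_cases hq : q = gB B i
  · subst hq
    simp
  · simp [hq]

/-! ### The beta-sets attached to a flow -/

lemma rowB_Icc_init {m ℓ : ℕ} (q : ℕ) : rowB m (Finset.Icc 1 ℓ) q = 0 := by
  rw [rowB, Finset.card_eq_zero, Finset.filter_eq_empty_iff]
  intro x hx
  rintro ⟨h1, h2⟩
  rw [Finset.mem_Icc] at h1 hx
  have hempty : (Finset.Icc 1 ℓ).filter (fun p' => x < p') = ∅ := by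
    rw [Finset.filter_eq_empty_iff]
    intro y hy
    rw [Finset.mem_Icc] at hy
    omega
  rw [gB, hempty] at h2
  simp at h2

section FlowInv

variable {n ℓ m s : ℕ} {P : LadderPresentation n ℓ m s}

/-- The beta-set of component `t` at time `r`. -/
def Bf (f : LadderFlow P) (r : Fin (s+1)) (t : ℕ) : Finset ℕ :=
  (Finset.Icc 1 m).filter fun p => t ∈ f.S r p

variable (f : LadderFlow P)

lemma Bf_subset (r : Fin (s+1)) (t : ℕ) : Bf f r t ⊆ Finset.Icc 1 m :=
  Finset.filter_subset _ _

lemma T_sub_Icc (r : Fin s) : f.T r ⊆ Finset.Icc 1 n :=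
  fun t ht => f.S_sub _ _ (f.T_sub r ht)

lemma S_succ_res {r : ℕ} (hr : r < s) :
    f.S ⟨r+1, by omega⟩ (P.res ⟨r, hr⟩)
      = f.S ⟨r, by omega⟩ (P.res ⟨r, hr⟩) \ f.T ⟨r, hr⟩ := f.S_step_res ⟨r, hr⟩

lemma S_succ_res1 {r : ℕ} (hr : r < s) :
    f.S ⟨r+1, by omega⟩ (P.res ⟨r, hr⟩ + 1)
      = f.S ⟨r, by omega⟩ (P.res ⟨r, hr⟩ + 1) ∪ f.T ⟨r, hr⟩ := f.S_step_res1 ⟨r, hr⟩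

lemma S_succ_other {r : ℕ} (hr : r < s) (p : ℕ) (h1 : p ≠ P.res ⟨r, hr⟩)
    (h2 : p ≠ P.res ⟨r, hr⟩ + 1) :
    f.S ⟨r+1, by omega⟩ p = f.S ⟨r, by omega⟩ p := f.S_step_other ⟨r, hr⟩ p h1 h2

lemma Bf_zero (hm : ℓ ≤ m) (t : ℕ) (ht : t ∈ Finset.Icc 1 n) :
    Bf f ⟨0, Nat.succ_pos s⟩ t = Finset.Icc 1 ℓ := by
  have h0 : (⟨0, Nat.succ_pos s⟩ : Fin (s+1)) = 0 := rfl
  ext p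
  simp only [Bf, Finset.mem_filter, Finset.mem_Icc, h0]
  constructor
  · rintro ⟨⟨hp1, hpm⟩, hts⟩
    rw [f.S_init p hp1 hpm] at hts
    by_cases hpl : p ≤ ℓ
    · exact ⟨hp1, hpl⟩
    · rw [if_neg hpl] at hts
      simp at hts
  · rintro ⟨hp1, hpl⟩
    refine ⟨⟨hp1, by omega⟩, ?_⟩
    rw [f.S_init p hp1 (by omega), if_pos hpl]
    exact ht

lemma res_mem_Bf {r : ℕ} (hr : r < s) {t : ℕ} (ht : t ∈ f.T ⟨r, hr⟩) :
    P.res ⟨r, hr⟩ ∈ Bf f ⟨r, by omega⟩ t ∧ P.res ⟨r, hr⟩ + 1 ∉ Bf f ⟨r, by omega⟩ t := by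
  constructor
  · simp only [Bf, Finset.mem_filter, Finset.mem_Icc]
    exact ⟨⟨P.res_pos _, (P.res_lt _).le⟩, f.T_sub ⟨r, hr⟩ ht⟩
  · simp only [Bf, Finset.mem_filter, Finset.mem_Icc]
    rintro ⟨-, hmem⟩
    exact (Finset.disjoint_left.mp (f.T_disj ⟨r, hr⟩) ht) hmem

lemma Bf_step_mem {r : ℕ} (hr : r < s) {t : ℕ} (ht : t ∈ f.T ⟨r, hr⟩) :
    Bf f ⟨r+1, by omega⟩ t
      = insert (P.res ⟨r, hr⟩ + 1) ((Bf f ⟨r, by omega⟩ t).erase (P.res ⟨r, hr⟩)) := by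
  have hi1 : 1 ≤ P.res ⟨r, hr⟩ := P.res_pos _
  have him : P.res ⟨r, hr⟩ < m := P.res_lt _
  ext p
  simp only [Bf, Finset.mem_filter, Finset.mem_insert, Finset.mem_erase]
  rcases eq_or_ne p (P.res ⟨r, hr⟩) with rfl | hpi
  · rw [S_succ_res f hr]
    simp only [Finset.mem_sdiff]
    constructor
    · rintro ⟨-, -, hT⟩
      exact absurd ht hT
    · rintro (h | ⟨hne, -⟩)
      · exact absurd h (by omega)
      · exact absurd rfl hne
  · rcases eq_or_ne p (P.res ⟨r, hr⟩ + 1) with rfl | hpi1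
    · rw [S_succ_res1 f hr]
      simp only [Finset.mem_union]
      constructor
      · rintro -
        left
        trivial
      · rintro -
        exact ⟨Finset.mem_Icc.mpr ⟨by omega, by omega⟩, Or.inr ht⟩
    · rw [S_succ_other f hr p hpi hpi1]
      constructor
      · rintro ⟨hpm, hS⟩
        exact Or.inr ⟨hpi, hpm, hS⟩
      · rintro (h | ⟨-, hpm, hS⟩)
        · exact absurd h hpi1
        · exact ⟨hpm, hS⟩

lemma Bf_step_not_mem {r : ℕ} (hr : r < s) {t : ℕ} (ht : t ∉ f.T ⟨r, hr⟩) :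
    Bf f ⟨r+1, by omega⟩ t = Bf f ⟨r, by omega⟩ t := by
  ext p
  simp only [Bf, Finset.mem_filter]
  refine and_congr_right fun hpm => ?_
  rcases eq_or_ne p (P.res ⟨r, hr⟩) with rfl | hpi
  · rw [S_succ_res f hr]
    simp [Finset.mem_sdiff, ht]
  · rcases eq_or_ne p (P.res ⟨r, hr⟩ + 1) with rfl | hpi1
    · rw [S_succ_res1 f hr]
      simp [Finset.mem_union, ht]
    · rw [S_succ_other f hr p hpi hpi1]

lemma Bf_card (hm : ℓ ≤ m) :
    ∀ r (hr : r ≤ s), ∀ t, t ∈ Finset.Icc 1 n →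
      (Bf f ⟨r, Nat.lt_succ_of_le hr⟩ t).card = ℓ := by
  intro r
  induction r with
  | zero =>
    intro hr t ht
    rw [Bf_zero f hm t ht, Nat.card_Icc]
    omega
  | succ r ih =>
    intro hr t ht
    have hrs : r < s := by omega
    by_cases htT : t ∈ f.T ⟨r, hrs⟩
    · obtain ⟨hiB, hi1B⟩ := res_mem_Bf f hrs htT
      rw [Bf_step_mem f hrs htT, Finset.card_insert_of_notMem
          (fun hmem => hi1B (Finset.mem_of_mem_erase hmem)),
        Finset.card_erase_of_mem hiB, ih (by omega) t ht]
      have hpos : 0 < (Bf f ⟨r, by omega⟩ t).card := Finset.card_pos.mpr ⟨_, hiB⟩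
      rw [ih (by omega) t ht] at hpos
      omega
    · rw [Bf_step_not_mem f hrs htT, ih (by omega) t ht]

/-- The main invariant: shapes built by `ι` are the partitions with beta-sets `Bf`. -/
lemma shape_eq (hm : ℓ ≤ m) :
    ∀ r (hr : r ≤ s), ∀ t,
      (iotaAux P f r).shape t
        = if t ∈ Finset.Icc 1 n then rowB m (Bf f ⟨r, Nat.lt_succ_of_le hr⟩ t)
          else fun _ => 0 := by
  intro r
  induction r with
  | zero =>
    intro hr t
    by_cases ht : t ∈ Finset.Icc 1 n
    · rw [if_pos ht, Bf_zero f hm t ht]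
      funext q
      exact (rowB_Icc_init q).symm
    · rw [if_neg ht]
      rfl
  | succ r ih =>
    intro hr t
    have hrs : r < s := by omega
    have hstep : iotaAux P f (r+1)
        = stepAdd ℓ (P.res ⟨r, hrs⟩ : ℤ) (r+1) (f.T ⟨r, hrs⟩) (iotaAux P f r) := by
      simp only [iotaAux, dif_pos hrs]
    rw [hstep]
    show (if t ∈ f.T ⟨r, hrs⟩ then addRes ℓ ((iotaAux P f r).shape t) (P.res ⟨r, hrs⟩ : ℤ)
        else (iotaAux P f r).shape t) = _
    by_cases htT : t ∈ f.T ⟨r, hrs⟩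
    · have htn : t ∈ Finset.Icc 1 n := T_sub_Icc f _ htT
      rw [if_pos htT, if_pos htn, ih (by omega) t, if_pos htn]
      obtain ⟨hiB, hi1B⟩ := res_mem_Bf f hrs htT
      rw [Bf_step_mem f hrs htT]
      exact addRes_spec (Bf_subset f _ t) (Bf_card f hm r (by omega) t htn)
        (P.res_pos _) (P.res_lt _) hiB hi1B
    · rw [if_neg htT, ih (by omega) t]
      by_cases htn : t ∈ Finset.Icc 1 n
      · rw [if_pos htn, if_pos htn, Bf_step_not_mem f hrs htT]
      · rw [if_neg htn, if_neg htn]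

end FlowInv

/-! ### Entry tracking -/

lemma le_addRes (ℓ : ℕ) (p : ℕ → ℕ) (k : ℤ) (q : ℕ) : p q ≤ addRes ℓ p k q := by
  rw [addRes]
  split
  · rw [Function.update_apply]
    split
    · rename_i hq
      subst hq
      omega
    · exact le_refl _
  · exact le_refl _

lemma stepAdd_shape (ℓ' : ℕ) (k : ℤ) (e : ℕ) (Tset : Finset ℕ) (M : MultiTableau) (t q : ℕ) :
    (stepAdd ℓ' k e Tset M).shape t q
      = if t ∈ Tset then addRes ℓ' (M.shape t) k q else M.shape t q := by
  show (if t ∈ Tset then addRes ℓ' (M.shape t) k else M.shape t) q = _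
  exact apply_ite (fun g : ℕ → ℕ => g q) _ _ _

section EntryInv

variable {n ℓ m s : ℕ} {P : LadderPresentation n ℓ m s} (f : LadderFlow P)

lemma iotaAux_step {r : ℕ} (hrs : r < s) :
    iotaAux P f (r+1)
      = stepAdd ℓ (P.res ⟨r, hrs⟩ : ℤ) (r+1) (f.T ⟨r, hrs⟩) (iotaAux P f r) := by
  simp only [iotaAux, dif_pos hrs]

lemma iotaAux_const {r : ℕ} (hrs : ¬ r < s) : iotaAux P f (r+1) = iotaAux P f r := by
  simp only [iotaAux, dif_neg hrs]

lemma shape_mono_succ (r t q : ℕ) :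
    (iotaAux P f r).shape t q ≤ (iotaAux P f (r+1)).shape t q := by
  by_cases hrs : r < s
  · rw [iotaAux_step f hrs, stepAdd_shape]
    split
    · exact le_addRes _ _ _ _
    · exact le_refl _
  · rw [iotaAux_const f hrs]

lemma shape_mono {r r' : ℕ} (h : r ≤ r') (t q : ℕ) :
    (iotaAux P f r).shape t q ≤ (iotaAux P f r').shape t q := by
  induction r', h using Nat.le_induction with
  | base => exact le_refl _
  | succ r' hr ih => exact ih.trans (shape_mono_succ f r' t q)

lemma entry_outside : ∀ r t q c, (iotaAux P f r).shape t q ≤ c →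
    (iotaAux P f r).entry t q c = 0 := by
  intro r
  induction r with
  | zero => intro t q c _; rfl
  | succ r ih =>
    intro t q c hc
    by_cases hrs : r < s
    · rw [iotaAux_step f hrs] at hc ⊢
      rw [stepAdd_shape] at hc
      show (if t ∈ f.T ⟨r, hrs⟩ ∧ (iotaAux P f r).shape t q ≤ c ∧
          c < addRes ℓ ((iotaAux P f r).shape t) (P.res ⟨r, hrs⟩ : ℤ) q
        then r+1 else (iotaAux P f r).entry t q c) = 0
      have hsh := hc
      by_cases htT : t ∈ f.T ⟨r, hrs⟩
      · rw [if_pos htT] at hsh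
        rw [if_neg (by rintro ⟨-, -, h3⟩; omega)]
        exact ih t q c ((le_addRes ℓ _ _ q).trans hsh)
      · rw [if_neg htT] at hsh
        rw [if_neg (by rintro ⟨h1, -, -⟩; exact htT h1)]
        exact ih t q c hsh
    · rw [iotaAux_const f hrs] at hc ⊢
      exact ih t q c hc

lemma entry_stable {r : ℕ} {t q c : ℕ} (hc : c < (iotaAux P f r).shape t q) :
    ∀ d, (iotaAux P f (r+d)).entry t q c = (iotaAux P f r).entry t q c := by
  intro d
  induction d with
  | zero => rfl
  | succ d ih =>
    by_cases hrs : r + d < s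
    · rw [show r + (d+1) = (r+d) + 1 from rfl, iotaAux_step f hrs]
      show (if t ∈ f.T ⟨r+d, hrs⟩ ∧ (iotaAux P f (r+d)).shape t q ≤ c ∧
          c < addRes ℓ ((iotaAux P f (r+d)).shape t) (P.res ⟨r+d, hrs⟩ : ℤ) q
        then (r+d)+1 else (iotaAux P f (r+d)).entry t q c) = (iotaAux P f r).entry t q c
      have hlt : c < (iotaAux P f (r+d)).shape t q :=
        lt_of_lt_of_le hc (shape_mono f (by omega) t q)
      rw [if_neg (by rintro ⟨-, h2, -⟩; omega)]
      exact ih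
    · rw [show r + (d+1) = (r+d) + 1 from rfl, iotaAux_const f hrs]
      exact ih

lemma entry_stable' {r r' : ℕ} (h : r ≤ r') {t q c : ℕ}
    (hc : c < (iotaAux P f r).shape t q) :
    (iotaAux P f r').entry t q c = (iotaAux P f r).entry t q c := by
  obtain ⟨d, rfl⟩ := Nat.exists_eq_add_of_le h
  exact entry_stable f hc d

lemma entry_eq_iff : ∀ r t q c j, 1 ≤ j →
    ((c < (iotaAux P f r).shape t q ∧ (iotaAux P f r).entry t q c = j) ↔
      (j ≤ r ∧ (iotaAux P f (j-1)).shape t q ≤ c ∧ c < (iotaAux P f j).shape t q)) := by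
  intro r
  induction r with
  | zero =>
    intro t q c j hj
    constructor
    · rintro ⟨hc, -⟩
      exact absurd hc (by simp [iotaAux])
    · rintro ⟨hjr, -⟩
      omega
  | succ r ih =>
    intro t q c j hj
    by_cases hrs : r < s
    · have hsh : (iotaAux P f (r+1)).shape t q
          = if t ∈ f.T ⟨r, hrs⟩ then addRes ℓ ((iotaAux P f r).shape t) (P.res ⟨r, hrs⟩ : ℤ) q
            else (iotaAux P f r).shape t q := by
        rw [iotaAux_step f hrs, stepAdd_shape]
      have hen : (iotaAux P f (r+1)).entry t q c
          = if t ∈ f.T ⟨r, hrs⟩ ∧ (iotaAux P f r).shape t q ≤ c ∧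
              c < addRes ℓ ((iotaAux P f r).shape t) (P.res ⟨r, hrs⟩ : ℤ) q
            then r+1 else (iotaAux P f r).entry t q c := by
        rw [iotaAux_step f hrs]; rfl
      by_cases hcr : c < (iotaAux P f r).shape t q
      · -- the cell already existed at time r
        have hC : ¬ (t ∈ f.T ⟨r, hrs⟩ ∧ (iotaAux P f r).shape t q ≤ c ∧
            c < addRes ℓ ((iotaAux P f r).shape t) (P.res ⟨r, hrs⟩ : ℤ) q) := by
          rintro ⟨-, h2, -⟩
          omega
        rw [if_neg hC] at hen
        have hcr1 : c < (iotaAux P f (r+1)).shape t q :=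
          lt_of_lt_of_le hcr (shape_mono_succ f r t q)
        constructor
        · rintro ⟨-, hej⟩
          rw [hen] at hej
          have hmain := (ih t q c j hj).mp ⟨hcr, hej⟩
          exact ⟨by omega, hmain.2.1, hmain.2.2⟩
        · rintro ⟨hjr1, hmid1, hmid2⟩
          have hjr : j ≤ r := by
            by_contra hcon
            have hj1 : j = r + 1 := by omega
            subst hj1
            simp only [Nat.add_sub_cancel] at hmid1
            omega
          have hmain := (ih t q c j hj).mpr ⟨hjr, hmid1, hmid2⟩
          exact ⟨hcr1, by rw [hen]; exact hmain.2⟩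
      · -- the cell did not exist at time r
        have hez : (iotaAux P f r).entry t q c = 0 := entry_outside f r t q c (not_lt.mp hcr)
        constructor
        · rintro ⟨hc1, hej⟩
          rw [hen] at hej
          by_cases hC : t ∈ f.T ⟨r, hrs⟩ ∧ (iotaAux P f r).shape t q ≤ c ∧
              c < addRes ℓ ((iotaAux P f r).shape t) (P.res ⟨r, hrs⟩ : ℤ) q
          · rw [if_pos hC] at hej
            subst hej
            refine ⟨le_refl _, ?_, hc1⟩
            simp only [Nat.add_sub_cancel]
            exact not_lt.mp hcr
          · rw [if_neg hC, hez] at hej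
            omega
        · rintro ⟨hjr1, hmid1, hmid2⟩
          by_cases hjr : j ≤ r
          · exact absurd (lt_of_lt_of_le hmid2 (shape_mono f hjr t q)) hcr
          · have hj1 : j = r + 1 := by omega
            subst hj1
            rw [hsh] at hmid2
            by_cases htT : t ∈ f.T ⟨r, hrs⟩
            · rw [if_pos htT] at hmid2
              have hC : t ∈ f.T ⟨r, hrs⟩ ∧ (iotaAux P f r).shape t q ≤ c ∧
                  c < addRes ℓ ((iotaAux P f r).shape t) (P.res ⟨r, hrs⟩ : ℤ) q :=
                ⟨htT, not_lt.mp hcr, hmid2⟩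
              refine ⟨?_, by rw [hen, if_pos hC]⟩
              rw [hsh, if_pos htT]
              exact hmid2
            · rw [if_neg htT] at hmid2
              exact absurd hmid2 hcr
    · have hconst := iotaAux_const f hrs
      rw [hconst]
      rw [ih t q c j hj]
      constructor
      · rintro ⟨h1, h2, h3⟩
        exact ⟨by omega, h2, h3⟩
      · rintro ⟨h1, h2, h3⟩
        refine ⟨?_, h2, h3⟩
        by_contra hcon
        have hj1 : j = r + 1 := by omega
        subst hj1
        simp only [Nat.add_sub_cancel] at h2
        rw [hconst] at h3
        omega

lemma entry_stage (t q c : ℕ) {r : ℕ} (hc : c < (iotaAux P f r).shape t q) :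
    ∃ j, 1 ≤ j ∧ j ≤ r ∧ (iotaAux P f (j-1)).shape t q ≤ c ∧
      c < (iotaAux P f j).shape t q ∧ (iotaAux P f r).entry t q c = j := by
  have hex : ∃ k, c < (iotaAux P f k).shape t q := ⟨r, hc⟩
  have hfj : c < (iotaAux P f (Nat.find hex)).shape t q := Nat.find_spec hex
  have hj1 : 1 ≤ Nat.find hex := by
    by_contra hcon
    have h0 : Nat.find hex = 0 := by omega
    rw [h0] at hfj
    exact absurd hfj (by simp [iotaAux])
  have hjle : Nat.find hex ≤ r := Nat.find_le hc
  have hprev : ¬ c < (iotaAux P f (Nat.find hex - 1)).shape t q := Nat.find_min hex (by omega)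
  refine ⟨Nat.find hex, hj1, hjle, not_lt.mp hprev, hfj, ?_⟩
  exact ((entry_eq_iff f r t q c (Nat.find hex) hj1).mpr ⟨hjle, not_lt.mp hprev, hfj⟩).2

end EntryInv

/-! ### Nodes, components and truncated shapes of the filled tableau -/

section NodeInv

variable {n ℓ m s : ℕ} {P : LadderPresentation n ℓ m s} (f : LadderFlow P)

lemma iotaMap_eq : iotaMap P f = iotaAux P f s := rfl

lemma step_node (hml : ℓ ≤ m) (r : Fin s) {t : ℕ} (ht : t ∈ f.T r) :
    ∃ q0 c0, (iotaAux P f r.val).shape t q0 = c0 ∧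
      (∀ q, (iotaAux P f (r.val+1)).shape t q
          = if q = q0 then c0 + 1 else (iotaAux P f r.val).shape t q) ∧
      resOf ℓ q0 c0 = (P.res r : ℤ) := by
  have hrs : r.val < s := r.isLt
  have htn : t ∈ Finset.Icc 1 n := T_sub_Icc f r ht
  have hBsub := Bf_subset f ⟨r.val, Nat.lt_succ_of_lt hrs⟩ t
  have hBcard := Bf_card f hml r.val (by omega) t htn
  have ht' : t ∈ f.T ⟨r.val, hrs⟩ := ht
  obtain ⟨hiB, hi1B⟩ := res_mem_Bf f hrs ht'
  obtain ⟨-, heq⟩ := addable_at (ℓ := ℓ) hBsub hBcard hiB hi1B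
  have heq' : rowB m (Bf f ⟨r.val, Nat.lt_succ_of_lt hrs⟩ t)
        (gB (Bf f ⟨r.val, Nat.lt_succ_of_lt hrs⟩ t) (P.res r)) + ℓ
      = P.res r + gB (Bf f ⟨r.val, Nat.lt_succ_of_lt hrs⟩ t) (P.res r) := heq
  clear heq
  refine ⟨gB (Bf f ⟨r.val, Nat.lt_succ_of_lt hrs⟩ t) (P.res r),
    rowB m (Bf f ⟨r.val, Nat.lt_succ_of_lt hrs⟩ t)
      (gB (Bf f ⟨r.val, Nat.lt_succ_of_lt hrs⟩ t) (P.res r)), ?_, ?_, ?_⟩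
  · rw [shape_eq f hml r.val (by omega) t, if_pos htn]
  · intro q
    rw [shape_eq f hml (r.val+1) (by omega) t, if_pos htn,
      shape_eq f hml r.val (by omega) t, if_pos htn]
    rw [Bf_step_mem f hrs ht']
    rw [rowB_swap hBsub (P.res_pos r) (P.res_lt r) hiB hi1B q]
    by_cases hq : q = gB (Bf f ⟨r.val, Nat.lt_succ_of_lt hrs⟩ t) (P.res r)
    · rw [if_pos hq, if_pos hq, hq]
    · rw [if_neg hq, if_neg hq]
  · rw [resOf]
    omega

lemma compsWith_eq (hml : ℓ ≤ m) (r : Fin s) :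
    compsWith n (iotaMap P f) (r.val + 1) = f.T r := by
  ext t
  simp only [compsWith, Finset.mem_filter]
  simp only [iotaMap_eq, InDiag]
  constructor
  · rintro ⟨htn, q, c, hdiag, hentry⟩
    obtain ⟨j', h1, h2, h3, h4, h5⟩ := entry_stage f t q c hdiag
    have hj' : j' = r.val + 1 := by rw [hentry] at h5; omega
    subst hj'
    simp only [Nat.add_sub_cancel] at h3
    by_contra htT
    have htT' : t ∉ f.T ⟨r.val, r.isLt⟩ := htT
    have hsh1 : (iotaAux P f (r.val+1)).shape t = (iotaAux P f r.val).shape t := by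
      rw [shape_eq f hml (r.val+1) (by omega) t, shape_eq f hml r.val (by omega) t]
      by_cases htn' : t ∈ Finset.Icc 1 n
      · rw [if_pos htn', if_pos htn', Bf_step_not_mem f r.isLt htT']
      · rw [if_neg htn', if_neg htn']
    rw [hsh1] at h4
    omega
  · intro ht
    refine ⟨T_sub_Icc f r ht, ?_⟩
    obtain ⟨q0, c0, hc0, hupd, -⟩ := step_node f hml r ht
    have h1 : c0 < (iotaAux P f (r.val+1)).shape t q0 := by
      rw [hupd q0, if_pos rfl]
      omega
    refine ⟨q0, c0, lt_of_lt_of_le h1 (shape_mono f (by omega : r.val+1 ≤ s) t q0), ?_⟩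
    exact ((entry_eq_iff f s t q0 c0 (r.val+1) (by omega)).mpr
      ⟨by omega, by simp only [Nat.add_sub_cancel]; omega, h1⟩).2

lemma node_eq (hml : ℓ ≤ m) (r : Fin s) {t : ℕ} (ht : t ∈ f.T r) :
    ∃ q0 c0, nodeRow (iotaMap P f) (r.val+1) t = q0 ∧
      nodeCol (iotaMap P f) (r.val+1) t = c0 ∧
      (iotaAux P f r.val).shape t q0 = c0 ∧
      (∀ q, (iotaAux P f (r.val+1)).shape t q
          = if q = q0 then c0 + 1 else (iotaAux P f r.val).shape t q) ∧
      resOf ℓ q0 c0 = (P.res r : ℤ) := by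
  obtain ⟨q0, c0, hc0, hupd, hres⟩ := step_node f hml r ht
  have huniq : ∀ q c, c < (iotaAux P f s).shape t q →
      (iotaAux P f s).entry t q c = r.val + 1 → q = q0 ∧ c = c0 := by
    intro q c hdiag hentry
    have h := (entry_eq_iff f s t q c (r.val+1) (by omega)).mp ⟨hdiag, hentry⟩
    have h2 := h.2.1
    have h3 := h.2.2
    simp only [Nat.add_sub_cancel] at h2
    rw [hupd q] at h3
    by_cases hq : q = q0
    · subst hq
      rw [if_pos rfl] at h3
      exact ⟨rfl, by omega⟩
    · rw [if_neg hq] at h3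
      omega
  have h1 : c0 < (iotaAux P f (r.val+1)).shape t q0 := by
    rw [hupd q0, if_pos rfl]
    omega
  have hdiag0 : c0 < (iotaAux P f s).shape t q0 :=
    lt_of_lt_of_le h1 (shape_mono f (by omega : r.val+1 ≤ s) t q0)
  have hex : ∃ q c, InDiag ((iotaMap P f).shape t) q c ∧
      (iotaMap P f).entry t q c = r.val + 1 := by
    refine ⟨q0, c0, hdiag0, ?_⟩
    exact ((entry_eq_iff f s t q0 c0 (r.val+1) (by omega)).mpr
      ⟨by omega, by simp only [Nat.add_sub_cancel]; omega, h1⟩).2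
  have hrow : nodeRow (iotaMap P f) (r.val+1) t = hex.choose := by
    rw [nodeRow, dif_pos hex]
  have hcol : nodeCol (iotaMap P f) (r.val+1) t = hex.choose_spec.choose := by
    rw [nodeCol, dif_pos hex]
  obtain ⟨hd, he⟩ := hex.choose_spec.choose_spec
  have hqc := huniq _ _ hd he
  exact ⟨q0, c0, by rw [hrow, hqc.1], by rw [hcol, hqc.2], hc0, hupd, hres⟩

lemma shapeTrunc_eq (r : Fin s) (Keep : Finset ℕ) (t : ℕ) :
    shapeTrunc (iotaMap P f) (r.val + 1) Keep t
      = (iotaAux P f (if t ∈ Keep then r.val + 1 else r.val)).shape t := by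
  funext q
  have hτle : (if t ∈ Keep then r.val + 1 else r.val) ≤ s := by
    split <;> omega
  rw [shapeTrunc]
  have hthr : (if t ∈ Keep then r.val + 1 else (r.val + 1) - 1)
      = (if t ∈ Keep then r.val + 1 else r.val) := by
    split <;> omega
  rw [hthr]
  have hset : ((Finset.range ((iotaMap P f).shape t q)).filter
        fun c => (iotaMap P f).entry t q c ≤ (if t ∈ Keep then r.val + 1 else r.val))
      = Finset.range ((iotaAux P f (if t ∈ Keep then r.val + 1 else r.val)).shape t q) := by
    ext c
    simp only [Finset.mem_filter, Finset.mem_range]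
    simp only [iotaMap_eq]
    constructor
    · rintro ⟨hcs, hle⟩
      obtain ⟨j', h1, h2, h3, h4, h5⟩ := entry_stage f t q c hcs
      have hj' : j' ≤ (if t ∈ Keep then r.val + 1 else r.val) := by omega
      exact lt_of_lt_of_le h4 (shape_mono f hj' t q)
    · intro hc
      have hcs : c < (iotaAux P f s).shape t q := lt_of_lt_of_le hc (shape_mono f hτle t q)
      refine ⟨hcs, ?_⟩
      obtain ⟨j', h1, h2, h3, h4, h5⟩ := entry_stage f t q c hcs
      rw [h5]
      by_contra hcon
      have hmono : (iotaAux P f (if t ∈ Keep then r.val + 1 else r.val)).shape t q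
          ≤ (iotaAux P f (j'-1)).shape t q := shape_mono f (by omega) t q
      omega
  rw [hset, Finset.card_range]

end NodeInv

/-! ### Counting lemmas -/

lemma inv2_sum (A T : Finset ℕ) : inv2 A T = ∑ t ∈ T, (A.filter fun x => x < t).card := by
  rw [inv2, Finset.card_filter, Finset.sum_product, Finset.sum_comm]
  refine Finset.sum_congr rfl fun t _ => (Finset.card_filter _ _).symm

lemma sum_rank (T : Finset ℕ) :
    ∑ t ∈ T, (T.filter fun x => x < t).card = T.card * (T.card - 1) / 2 := by
  have hsym : ∑ t ∈ T, (T.filter fun x => x < t).card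
      = ∑ t ∈ T, (T.filter fun x => t < x).card := by
    rw [← inv2_sum, inv2, Finset.card_filter, Finset.sum_product]
    refine Finset.sum_congr rfl fun t _ => (Finset.card_filter _ _).symm
  have htot : ∀ t ∈ T, (T.filter fun x => x < t).card + (T.filter fun x => t < x).card + 1
      = T.card := by
    intro t ht
    have hsplit := Finset.card_filter_add_card_filter_not (s := T) (p := fun x => x < t)
    have hne : (T.filter fun x => ¬ x < t) = insert t (T.filter fun x => t < x) := by
      ext x
      simp only [Finset.mem_filter, Finset.mem_insert, not_lt]
      constructor
      · rintro ⟨hx, hxt⟩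
        rcases eq_or_lt_of_le hxt with h | h
        · exact Or.inl h.symm
        · exact Or.inr ⟨hx, h⟩
      · rintro (rfl | ⟨hx, h⟩)
        · exact ⟨ht, le_refl _⟩
        · exact ⟨hx, h.le⟩
    rw [hne, Finset.card_insert_of_notMem (by simp)] at hsplit
    omega
  have h2 : 2 * ∑ t ∈ T, (T.filter fun x => x < t).card = T.card * (T.card - 1) := by
    calc 2 * ∑ t ∈ T, (T.filter fun x => x < t).card
        = ∑ t ∈ T, (T.filter fun x => x < t).card
          + ∑ t ∈ T, (T.filter fun x => t < x).card := by
          rw [← hsym]; ring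
    _ = ∑ t ∈ T, ((T.filter fun x => x < t).card + (T.filter fun x => t < x).card) := by
          rw [Finset.sum_add_distrib]
    _ = ∑ _t ∈ T, (T.card - 1) := by
          refine Finset.sum_congr rfl fun t ht => ?_
          have := htot t ht
          omega
    _ = T.card * (T.card - 1) := by
          rw [Finset.sum_const, smul_eq_mul]
  omega

lemma filter_sdiff_card (X Y : Finset ℕ) (p : ℕ → Prop) [DecidablePred p] :
    ((X \ Y).filter p).card + ((X ∩ Y).filter p).card = (X.filter p).card := by
  have e1 : (X \ Y).filter p = (X.filter p) \ (Y.filter p) := by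
    ext x
    simp only [Finset.mem_filter, Finset.mem_sdiff]
    tauto
  have e2 : (X ∩ Y).filter p = (X.filter p) ∩ (Y.filter p) := by
    ext x
    simp only [Finset.mem_filter, Finset.mem_inter]
    tauto
  rw [e1, e2, Finset.card_sdiff_add_card_inter]

lemma sdiff_card_diff (X Y : Finset ℕ) (p : ℕ → Prop) [DecidablePred p] :
    (((X \ Y).filter p).card : ℤ) - (((Y \ X).filter p).card : ℤ)
      = ((X.filter p).card : ℤ) - ((Y.filter p).card : ℤ) := by
  have h1 := filter_sdiff_card X Y p
  have h2 := filter_sdiff_card Y X p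
  have h3 : (Y ∩ X).filter p = (X ∩ Y).filter p := by rw [Finset.inter_comm]
  rw [h3] at h2
  omega

lemma filter_sdiff_card_subset {T X : Finset ℕ} (h : T ⊆ X) (p : ℕ → Prop) [DecidablePred p] :
    ((X \ T).filter p).card + (T.filter p).card = (X.filter p).card := by
  have h1 := filter_sdiff_card X T p
  have h2 : (X ∩ T).filter p = T.filter p := by rw [Finset.inter_eq_right.mpr h]
  rw [h2] at h1
  exact h1

/-! ### The per-step degree computation -/

section DegStep

variable {n ℓ m s : ℕ} {P : LadderPresentation n ℓ m s} (f : LadderFlow P)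

lemma degStep_eq (hml : ℓ ≤ m) (r : Fin s) :
    degStep n ℓ (iotaMap P f) (r.val + 1)
      = (inv2 (f.S r.succ (P.res r)) (f.T r) : ℤ)
        - (inv2 (f.S r.castSucc (P.res r + 1)) (f.T r) : ℤ) := by
  have hrs : r.val < s := r.isLt
  have hv : r.val < s + 1 := by omega
  have hv1 : r.val + 1 < s + 1 := by omega
  have hsucc : f.S r.succ (P.res r) = f.S ⟨r.val + 1, hv1⟩ (P.res r) := rfl
  have hcast : f.S r.castSucc (P.res r + 1) = f.S ⟨r.val, hv⟩ (P.res r + 1) := rfl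
  have hstep : f.S ⟨r.val + 1, hv1⟩ (P.res r)
      = f.S ⟨r.val, hv⟩ (P.res r) \ f.T r := S_succ_res f hrs
  rw [hsucc, hcast, hstep]
  set X := f.S ⟨r.val, hv⟩ (P.res r) with hXdef
  set Y := f.S ⟨r.val, hv⟩ (P.res r + 1) with hYdef
  have hTX : f.T r ⊆ X := f.T_sub r
  have hi1 : 1 ≤ P.res r := P.res_pos r
  have him : P.res r + 1 ≤ m := P.res_lt r
  have hmemX : ∀ t', P.res r ∈ Bf f ⟨r.val, hv⟩ t' ↔ t' ∈ X := by
    intro t'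
    simp only [Bf, Finset.mem_filter, Finset.mem_Icc, hXdef]
    constructor
    · rintro ⟨-, h⟩
      exact h
    · intro h
      exact ⟨⟨hi1, by omega⟩, h⟩
  have hmemY : ∀ t', P.res r + 1 ∈ Bf f ⟨r.val, hv⟩ t' ↔ t' ∈ Y := by
    intro t'
    simp only [Bf, Finset.mem_filter, Finset.mem_Icc, hYdef]
    constructor
    · rintro ⟨-, h⟩
      exact h
    · intro h
      exact ⟨⟨by omega, him⟩, h⟩
  simp only [degStep]
  rw [compsWith_eq f hml r]
  have hsummand : ∀ t ∈ f.T r,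
      ((cntAddAfter n ℓ (shapeTrunc (iotaMap P f) (r.val+1) ((f.T r).filter fun t' => t ≤ t'))
          (resOf ℓ (nodeRow (iotaMap P f) (r.val+1) t) (nodeCol (iotaMap P f) (r.val+1) t))
          t (nodeRow (iotaMap P f) (r.val+1) t) : ℤ)
        - (cntRemAfter n ℓ (shapeTrunc (iotaMap P f) (r.val+1) ((f.T r).filter fun t' => t ≤ t'))
          (resOf ℓ (nodeRow (iotaMap P f) (r.val+1) t) (nodeCol (iotaMap P f) (r.val+1) t))
          t (nodeRow (iotaMap P f) (r.val+1) t) : ℤ))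
      = ((X.filter fun x => x < t).card : ℤ) - ((Y.filter fun x => x < t).card : ℤ) := by
    intro t ht
    have htn : t ∈ Finset.Icc 1 n := T_sub_Icc f r ht
    have ht' : t ∈ f.T ⟨r.val, hrs⟩ := ht
    obtain ⟨q0, c0, hqr, hqc, hc0, hupd, hres⟩ := node_eq f hml r ht
    rw [hqr, hqc, hres]
    set Keep := (f.T r).filter (fun t' => t ≤ t') with hKeepdef
    have hkeept : t ∈ Keep := by
      rw [hKeepdef, Finset.mem_filter]
      exact ⟨ht, le_refl t⟩
    have hkeeplt : ∀ t', t' < t → t' ∉ Keep := by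
      intro t' hlt hmem
      rw [hKeepdef, Finset.mem_filter] at hmem
      omega
    have hshp : (iotaAux P f (r.val+1)).shape t = rowB m (Bf f ⟨r.val+1, hv1⟩ t) := by
      rw [shape_eq f hml (r.val+1) (by omega) t, if_pos htn]
    have hBsub1 := Bf_subset f ⟨r.val+1, hv1⟩ t
    have hBcard1 := Bf_card f hml (r.val+1) (by omega) t htn
    have hBstep : Bf f ⟨r.val+1, hv1⟩ t
        = insert (P.res r + 1) ((Bf f ⟨r.val, hv⟩ t).erase (P.res r)) :=
      Bf_step_mem f hrs ht'
    have haddset : ((Finset.Icc 1 n).filter fun t' => ∃ r' c',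
          IsAddableCell (shapeTrunc (iotaMap P f) (r.val+1) Keep t') r' c' ∧
            resOf ℓ r' c' = (P.res r : ℤ) ∧ (t' < t ∨ t' = t ∧ q0 < r'))
        = (X \ Y).filter fun x => x < t := by
      ext t'
      simp only [Finset.mem_filter, Finset.mem_sdiff]
      constructor
      · rintro ⟨htn', q, c, hcell, hresq, hpos⟩
        rw [shapeTrunc_eq f r Keep t'] at hcell
        rcases hpos with hlt | ⟨rfl, hq⟩
        · rw [if_neg (hkeeplt t' hlt), shape_eq f hml r.val (by omega) t',
            if_pos htn'] at hcell
          have hmem := (addable_iff (Bf_subset f ⟨r.val, hv⟩ t')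
            (Bf_card f hml r.val (by omega) t' htn') hi1).mp ⟨q, c, hcell, hresq⟩
          exact ⟨⟨(hmemX t').mp hmem.1, fun hYm => hmem.2 ((hmemY t').mpr hYm)⟩, hlt⟩
        · exfalso
          rw [if_pos hkeept, hshp] at hcell
          have hmem := (addable_iff hBsub1 hBcard1 hi1).mp ⟨q, c, hcell, hresq⟩
          rw [hBstep] at hmem
          obtain ⟨hmem2, -⟩ := hmem
          simp only [Finset.mem_insert, Finset.mem_erase] at hmem2
          rcases hmem2 with h | ⟨h, -⟩
          · omega
          · exact h rfl
      · rintro ⟨⟨hXm, hYm⟩, hlt⟩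
        have hXm' : t' ∈ f.S ⟨r.val, hv⟩ (P.res r) := hXm
        have htn' : t' ∈ Finset.Icc 1 n := f.S_sub _ _ hXm'
        refine ⟨htn', ?_⟩
        obtain ⟨q, c, hcell, hresq⟩ := (addable_iff (Bf_subset f ⟨r.val, hv⟩ t')
          (Bf_card f hml r.val (by omega) t' htn') hi1).mpr
          ⟨(hmemX t').mpr hXm, fun hc => hYm ((hmemY t').mp hc)⟩
        refine ⟨q, c, ?_, hresq, Or.inl hlt⟩
        rw [shapeTrunc_eq f r Keep t', if_neg (hkeeplt t' hlt),
          shape_eq f hml r.val (by omega) t', if_pos htn']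
        exact hcell
    have hremset : ((Finset.Icc 1 n).filter fun t' => ∃ r' c',
          IsRemovableCell (shapeTrunc (iotaMap P f) (r.val+1) Keep t') r' c' ∧
            resOf ℓ r' c' = (P.res r : ℤ) ∧ (t' < t ∨ t' = t ∧ q0 < r'))
        = (Y \ X).filter fun x => x < t := by
      ext t'
      simp only [Finset.mem_filter, Finset.mem_sdiff]
      constructor
      · rintro ⟨htn', q, c, hcell, hresq, hpos⟩
        rw [shapeTrunc_eq f r Keep t'] at hcell
        rcases hpos with hlt | ⟨rfl, hq⟩
        · rw [if_neg (hkeeplt t' hlt), shape_eq f hml r.val (by omega) t',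
            if_pos htn'] at hcell
          have hmem := (removable_iff (Bf_subset f ⟨r.val, hv⟩ t')
            (Bf_card f hml r.val (by omega) t' htn') hi1 him).mp ⟨q, c, hcell, hresq⟩
          exact ⟨⟨(hmemY t').mp hmem.2, fun hXm => hmem.1 ((hmemX t').mpr hXm)⟩, hlt⟩
        · exfalso
          rw [if_pos hkeept, hshp] at hcell
          obtain ⟨hcq, hstrict⟩ := hcell
          rw [resOf] at hresq hres
          have h1 : (rowB m (Bf f ⟨r.val+1, hv1⟩ t') q : ℤ) - q
              = (P.res r : ℤ) + 1 - ℓ := by omega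
          have hq0row : rowB m (Bf f ⟨r.val+1, hv1⟩ t') q0 = c0 + 1 := by
            have h0 := hupd q0
            rw [if_pos rfl, hshp] at h0
            exact h0
          have h2 : (rowB m (Bf f ⟨r.val+1, hv1⟩ t') q0 : ℤ) - q0
              = (P.res r : ℤ) + 1 - ℓ := by
            rw [hq0row]
            omega
          have := rowB_inj_res (m := m) (Bf f ⟨r.val+1, hv1⟩ t') h1 h2
          omega
      · rintro ⟨⟨hYm, hXm⟩, hlt⟩
        have hYm' : t' ∈ f.S ⟨r.val, hv⟩ (P.res r + 1) := hYm
        have htn' : t' ∈ Finset.Icc 1 n := f.S_sub _ _ hYm'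
        refine ⟨htn', ?_⟩
        obtain ⟨q, c, hcell, hresq⟩ := (removable_iff (Bf_subset f ⟨r.val, hv⟩ t')
          (Bf_card f hml r.val (by omega) t' htn') hi1 him).mpr
          ⟨fun hc => hXm ((hmemX t').mp hc), (hmemY t').mpr hYm⟩
        refine ⟨q, c, ?_, hresq, Or.inl hlt⟩
        rw [shapeTrunc_eq f r Keep t', if_neg (hkeeplt t' hlt),
          shape_eq f hml r.val (by omega) t', if_pos htn']
        exact hcell
    simp only [cntAddAfter, cntRemAfter]
    rw [haddset, hremset]
    exact sdiff_card_diff X Y fun x => x < t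
  rw [Finset.sum_congr rfl hsummand]
  rw [inv2_sum (X \ f.T r) (f.T r), inv2_sum Y (f.T r)]
  have hAfilter : ∀ t ∈ f.T r, (((X \ f.T r).filter fun x => x < t).card : ℤ)
      = ((X.filter fun x => x < t).card : ℤ)
        - (((f.T r).filter fun x => x < t).card : ℤ) := by
    intro t _
    have := filter_sdiff_card_subset hTX (fun x => x < t)
    omega
  have hCsum : ∑ t ∈ f.T r, (((f.T r).filter fun x => x < t).card : ℤ)
      = (((f.T r).card * ((f.T r).card - 1) / 2 : ℕ) : ℤ) := by
    rw [← Nat.cast_sum, sum_rank]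
  push_cast
  rw [Finset.sum_congr rfl hAfilter, Finset.sum_sub_distrib, Finset.sum_sub_distrib, hCsum]
  push_cast
  ring

end DegStep

/-!
STATEMENT 3: Degree equals weight (Brundan–Kleshchev–Wang degree versus flow
weight): for every flow `f` on a valid ladder presentation `P` one has
`deg_BKW(ι(P,f)) = wt(f)`.
-/
lemma sum_Icc_one_fin (s : ℕ) (g : ℕ → ℤ) :
    ∑ j ∈ Finset.Icc 1 s, g j = ∑ r : Fin s, g (r.val + 1) := by
  induction s with
  | zero => simp
  | succ s ih =>
    rw [Finset.sum_Icc_succ_top (by omega), ih, Fin.sum_univ_castSucc]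
    simp [Fin.coe_castSucc, Fin.val_last]

theorem degBKW_iota_eq_wtFlow (n ℓ m : ℕ) (hn : 2 ≤ n) (hℓ : 1 ≤ ℓ)
    (hm : ℓ + 1 ≤ m) (s : ℕ) (P : LadderPresentation n ℓ m s) (hP : IsValid P)
    (f : LadderFlow P) :
    degBKW n ℓ s (iotaMap P f) = wtFlow P f := by
  have hml : ℓ ≤ m := by omega
  rw [degBKW, wtFlow]
  rw [sum_Icc_one_fin s (fun j => degStep n ℓ (iotaMap P f) j)]
  refine Finset.sum_congr rfl fun r _ => ?_
  exact degStep_eq f hml r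

end

end SlnWeb
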